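/- Let h > 0, σ ≥ 0, ω ∈ ℝ with ω ≠ 0, and ξ ∈ ℝ, and suppose σ² + 2ω² − σ² cos(ξh) + 2σω sin(ξh) ≠ 0. Then the denominator of ρ(σ, ξ, ω) is nonzero and |ρ(σ, ξ, ω)|² = (σ² + 2ω² − σ² cos(ξh) − 2σω sin(ξh)) / (σ² + 2ω² − σ² cos(ξh) + 2σω sin(ξh)). -/

import Mathlib

/-- The attenuation factor
`ρ(σ, ξ, ω) = (2 + i(σ/ω)(1 − e^{−iξh})) / (2 + i(σ/ω)(1 − e^{iξh}))`. -/
noncomputable def rho (σ : ℝ) (ξ : ℂ) (ω h : ℝ) : ℂ :=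
  (2 + Complex.I * ((σ : ℂ) / (ω : ℂ)) * (1 - Complex.exp (-(Complex.I * ξ * (h : ℂ))))) /
  (2 + Complex.I * ((σ : ℂ) / (ω : ℂ)) * (1 - Complex.exp (Complex.I * ξ * (h : ℂ))))

/-- explicit formula for `|ρ(σ, ξ, ω)|²` for real `ξ`. -/
theorem stmt9 (h : ℝ) (hh : 0 < h) (σ : ℝ) (hσ : 0 ≤ σ) (ω : ℝ) (hω : ω ≠ 0) (ξ : ℝ)
    (hD : σ ^ 2 + 2 * ω ^ 2 - σ ^ 2 * Real.cos (ξ * h) + 2 * σ * ω * Real.sin (ξ * h) ≠ 0) :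
    (2 + Complex.I * ((σ : ℂ) / (ω : ℂ)) *
        (1 - Complex.exp (Complex.I * (ξ : ℂ) * (h : ℂ))) ≠ 0) ∧
    (‖rho σ (ξ : ℂ) ω h‖) ^ 2 =
      (σ ^ 2 + 2 * ω ^ 2 - σ ^ 2 * Real.cos (ξ * h) - 2 * σ * ω * Real.sin (ξ * h)) /
      (σ ^ 2 + 2 * ω ^ 2 - σ ^ 2 * Real.cos (ξ * h) + 2 * σ * ω * Real.sin (ξ * h)) := by
  set c := Real.cos (ξ * h) with hc
  set s := Real.sin (ξ * h) with hs
  have hωC : (ω : ℂ) ≠ 0 := by exact_mod_cast hω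
  have hexp : Complex.exp (Complex.I * (ξ : ℂ) * (h : ℂ)) = (c : ℂ) + (s : ℂ) * Complex.I := by
    have : Complex.I * (ξ : ℂ) * (h : ℂ) = ((ξ * h : ℝ) : ℂ) * Complex.I := by
      push_cast; ring
    rw [this, Complex.exp_mul_I, ← Complex.ofReal_cos, ← Complex.ofReal_sin, hc, hs]
  have hexp' : Complex.exp (-(Complex.I * (ξ : ℂ) * (h : ℂ))) = (c : ℂ) - (s : ℂ) * Complex.I := by
    have : -(Complex.I * (ξ : ℂ) * (h : ℂ)) = ((-(ξ * h) : ℝ) : ℂ) * Complex.I := by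
      push_cast; ring
    rw [this, Complex.exp_mul_I, Complex.ofReal_neg, Complex.cos_neg, Complex.sin_neg,
      ← Complex.ofReal_cos, ← Complex.ofReal_sin, hc, hs]
    ring
  have hsc : s ^ 2 + c ^ 2 = 1 := by
    rw [hs, hc]; exact Real.sin_sq_add_cos_sq _
  -- denominator in a + b*I form
  have hDform : 2 + Complex.I * ((σ : ℂ) / (ω : ℂ)) *
      (1 - Complex.exp (Complex.I * (ξ : ℂ) * (h : ℂ)))
      = (((2 * ω + σ * s) / ω : ℝ) : ℂ) + (((σ * (1 - c)) / ω : ℝ) : ℂ) * Complex.I := by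
    rw [hexp]
    push_cast
    field_simp
    ring_nf
    rw [Complex.I_sq]
    ring
  have hNform : 2 + Complex.I * ((σ : ℂ) / (ω : ℂ)) *
      (1 - Complex.exp (-(Complex.I * (ξ : ℂ) * (h : ℂ))))
      = (((2 * ω - σ * s) / ω : ℝ) : ℂ) + (((σ * (1 - c)) / ω : ℝ) : ℂ) * Complex.I := by
    rw [hexp']
    push_cast
    field_simp
    ring_nf
    rw [Complex.I_sq]
    ring
  have hnsD : Complex.normSq (2 + Complex.I * ((σ : ℂ) / (ω : ℂ)) *
      (1 - Complex.exp (Complex.I * (ξ : ℂ) * (h : ℂ))))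
      = (2 * (σ ^ 2 + 2 * ω ^ 2 - σ ^ 2 * c + 2 * σ * ω * s)) / ω ^ 2 := by
    rw [hDform, Complex.normSq_add_mul_I]
    have hω2 : ω ^ 2 ≠ 0 := pow_ne_zero _ hω
    field_simp
    nlinarith [hsc]
  have hnsN : Complex.normSq (2 + Complex.I * ((σ : ℂ) / (ω : ℂ)) *
      (1 - Complex.exp (-(Complex.I * (ξ : ℂ) * (h : ℂ)))))
      = (2 * (σ ^ 2 + 2 * ω ^ 2 - σ ^ 2 * c - 2 * σ * ω * s)) / ω ^ 2 := by
    rw [hNform, Complex.normSq_add_mul_I]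
    have hω2 : ω ^ 2 ≠ 0 := pow_ne_zero _ hω
    field_simp
    nlinarith [hsc]
  have hω2 : (ω : ℝ) ^ 2 ≠ 0 := pow_ne_zero _ hω
  have hDne : 2 + Complex.I * ((σ : ℂ) / (ω : ℂ)) *
      (1 - Complex.exp (Complex.I * (ξ : ℂ) * (h : ℂ))) ≠ 0 := by
    intro hzero
    rw [hzero, map_zero] at hnsD
    apply hD
    field_simp at hnsD
    linarith
  refine ⟨hDne, ?_⟩
  rw [rho, ← Complex.normSq_eq_norm_sq, Complex.normSq_div, hnsD, hnsN]
  rw [div_div_div_comm, div_self hω2, div_one, mul_div_mul_left _ _ (two_ne_zero)]
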